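/- Let W be a complete discrete valuation ring of characteristic p with uniformizer μ and algebraically closed residue field, let q = p^e, r ≥ 1, n ≥ 1, and t ∈ W. Let ψ̄ = t̄X + X^{q^r} ∈ (W/(μ^n))[X], where t̄ is the reduction of t. Then the set of q-polynomials u over W/(μ^n) that are compositional units and satisfy u∘ψ̄ = ψ̄∘u is exactly {cX : c ∈ W/(μ^n), c^{q^r−1} = 1}, and this set has exactly q^r − 1 elements. -/

import Mathlib

/-- A `q`-polynomial: all nonzero coefficients sit in degrees that are powers of `q`. -/
def IsqPoly (q : ℕ) {R : Type*} [Semiring R] (f : Polynomial R) : Prop :=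
  ∀ n ∈ f.support, ∃ i : ℕ, n = q ^ i

/-- The set of isomorphisms from `φ` to `ψ` over `R`: `q`-polynomials that are
compositional units and intertwine `φ` and `ψ`. -/
def IsoSet (q : ℕ) {R : Type*} [CommRing R] (φ ψ : Polynomial R) : Set (Polynomial R) :=
  {u | IsqPoly q u ∧
    (∃ v : Polynomial R, IsqPoly q v ∧ u.comp v = Polynomial.X ∧ v.comp u = Polynomial.X) ∧
    u.comp φ = ψ.comp u}

open Polynomial

lemma qpoly_comm_rel {R : Type*} [CommRing R] {p e q r : ℕ} (hp : p.Prime) [CharP R p]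
    (he : 0 < e) (hq : q = p ^ e) (hr : 1 ≤ r) (T : R) {u : Polynomial R}
    (hu : IsqPoly q u)
    (hcomm : u.comp (C T * X + X ^ q ^ r) = (C T * X + X ^ q ^ r).comp u) (j : ℕ) :
    u.coeff (q ^ (j + r)) * T ^ (q ^ (j + r)) + u.coeff (q ^ j)
      = T * u.coeff (q ^ (j + r)) + (u.coeff (q ^ j)) ^ (q ^ r) := by
  haveI := Fact.mk hp
  have hq1 : 1 < q := hq ▸ Nat.one_lt_pow he.ne' hp.one_lt
  have hiff : ∀ a b : ℕ, q ^ a = q ^ b ↔ a = b :=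
    fun a b => ⟨fun h => Nat.pow_right_injective hq1 h, fun h => h ▸ rfl⟩
  set ψ : R[X] := C T * X + X ^ q ^ r with hψdef
  have h1 : ψ.comp u = C T * u + u ^ q ^ r := by
    simp [hψdef, add_comp, mul_comp, C_comp, X_comp, pow_comp]
  have h2 : (u ^ q ^ r).coeff (q ^ (j + r)) = (u.coeff (q ^ j)) ^ q ^ r := by
    have hfrob : u ^ q ^ r = (Polynomial.expand R (q ^ r) u).map (frobenius R p ^ (e * r)) := by
      rw [hq, ← pow_mul]
      rw [← map_iterateFrobenius_expand p u (e * r)]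
      congr 1
      ext x
      simp [iterateFrobenius_def, RingHom.coe_pow, iterate_frobenius]
    have hdvd : q ^ r ∣ q ^ (j + r) := pow_dvd_pow q (Nat.le_add_left r j)
    have hdiv : q ^ (j + r) / q ^ r = q ^ j := by
      rw [pow_add, Nat.mul_div_cancel _ (pow_pos (by omega) r)]
    have hpe : (p:ℕ) ^ (e * r) = q ^ r := by rw [hq, ← pow_mul]
    rw [hfrob, coeff_map, Polynomial.coeff_expand (pow_pos (by omega) r), if_pos hdvd, hdiv,
      RingHom.coe_pow, iterate_frobenius, hpe]
  have h3 : ∀ i : ℕ, ψ ^ q ^ i = C (T ^ q ^ i) * X ^ q ^ i + X ^ q ^ (i + r) := by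
    intro i
    have key := add_pow_char_pow (R := R[X]) (C T * X) (X ^ q ^ r) p (e * i)
    have hpe : (p:ℕ) ^ (e * i) = q ^ i := by rw [hq, ← pow_mul]
    rw [hpe] at key
    have hexp : q ^ r * q ^ i = q ^ (i + r) := by rw [← pow_add, add_comm]
    rw [hψdef, key, mul_pow, ← C_pow, ← pow_mul, hexp]
  have h4 : (u.comp ψ).coeff (q ^ (j + r))
      = u.coeff (q ^ (j + r)) * T ^ (q ^ (j + r)) + u.coeff (q ^ j) := by
    rw [comp_eq_sum_left, Polynomial.sum_def, finset_sum_coeff]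
    have trans : ∀ m ∈ u.support, (C (u.coeff m) * ψ ^ m).coeff (q ^ (j + r)) =
        (if m = q ^ (j + r) then u.coeff m * T ^ (q ^ (j + r)) else 0)
          + (if m = q ^ j then u.coeff m else 0) := by
      intro m hm
      obtain ⟨i, rfl⟩ := hu m hm
      rw [coeff_C_mul, h3 i, coeff_add, coeff_C_mul, coeff_X_pow, coeff_X_pow]
      simp only [hiff]
      split_ifs
      all_goals try (exfalso; omega)
      all_goals try ring
      all_goals (rw [show i = j + r by omega]; ring)
    rw [Finset.sum_congr rfl trans, Finset.sum_add_distrib, Finset.sum_ite_eq' u.support,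
      Finset.sum_ite_eq' u.support]
    split_ifs with hA hB hB
    · rfl
    · rw [notMem_support_iff.mp hB]
    · rw [notMem_support_iff.mp hA]; ring
    · rw [notMem_support_iff.mp hA, notMem_support_iff.mp hB]; ring
  have hfin := congrArg (fun f : R[X] => f.coeff (q ^ (j + r))) hcomm
  simpa [h4, h1, coeff_add, coeff_C_mul, h2] using hfin

lemma qpoly_comm_coeff_zero {R : Type*} [CommRing R] {p e q r : ℕ} (hp : p.Prime) [CharP R p]
    (he : 0 < e) (hq : q = p ^ e) (hr : 1 ≤ r) (T : R) {u : Polynomial R}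
    (hu : IsqPoly q u)
    (hcomm : u.comp (C T * X + X ^ q ^ r) = (C T * X + X ^ q ^ r).comp u)
    (hnil : ∀ i, 1 ≤ i → IsNilpotent (u.coeff (q ^ i))) :
    ∀ i, 1 ≤ i → u.coeff (q ^ i) = 0 := by
  have hq1 : 1 < q := hq ▸ Nat.one_lt_pow he.ne' hp.one_lt
  have hqr1 : 1 ≤ q ^ r - 1 := by
    have : 2 ≤ q ^ r := by
      calc 2 ≤ q := hq1
      _ = q ^ 1 := (pow_one q).symm
      _ ≤ q ^ r := Nat.pow_le_pow_right (by omega) hr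
    omega
  have step : ∀ i, 1 ≤ i → u.coeff (q ^ (i + r)) = 0 → u.coeff (q ^ i) = 0 := by
    intro i hi hir
    have rel := qpoly_comm_rel hp he hq hr T hu hcomm i
    rw [hir] at rel
    simp only [zero_mul, mul_zero, zero_add] at rel
    -- rel : u.coeff (q ^ i) = u.coeff (q ^ i) ^ q ^ r
    set a := u.coeff (q ^ i) with ha
    have h1 : a * (1 - a ^ (q ^ r - 1)) = 0 := by
      have : a ^ (q ^ r) = a * a ^ (q ^ r - 1) := by
        rw [← pow_succ']
        congr 1
        omega
      rw [mul_sub, mul_one, ← this, ← rel, sub_self]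
    have h2 : IsUnit (1 - a ^ (q ^ r - 1)) :=
      ((hnil i hi).pow_of_pos (by omega)).isUnit_one_sub
    have := (h2.mul_left_eq_zero (a := a)).mp ?_
    · exact this
    · exact h1
  have key : ∀ k i, 1 ≤ i → u.natDegree < q ^ (i + k) → u.coeff (q ^ i) = 0 := by
    intro k
    induction k using Nat.strong_induction_on with
    | _ k IH =>
      match k with
      | 0 =>
        intro i hi hdeg
        exact coeff_eq_zero_of_natDegree_lt (by simpa using hdeg)
      | Nat.succ k =>
        intro i hi hdeg
        refine step i hi ?_
        refine IH (k + 1 - r) (by omega) (i + r) (by omega) ?_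
        calc u.natDegree < q ^ (i + (k + 1)) := hdeg
          _ ≤ q ^ (i + r + (k + 1 - r)) := Nat.pow_le_pow_right (by omega) (by omega)
  intro i hi
  refine key u.natDegree i hi ?_
  calc u.natDegree < q ^ u.natDegree := Nat.lt_pow_self hq1
    _ ≤ q ^ (i + u.natDegree) := Nat.pow_le_pow_right (by omega) (by omega)



lemma count_roots_nilpotent {R k : Type*} [CommRing R] [Field k] [IsAlgClosed k]
    (π : R →+* k) (hπs : Function.Surjective π)
    (hker : ∀ x, π x = 0 → IsNilpotent x) (hunit : ∀ x : R, π x ≠ 0 → IsUnit x)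
    {p : ℕ} (hp : p.Prime) [CharP R p] (N : ℕ) (hN : 0 < N) (hpN : ¬ p ∣ N)
    (hNk : (N : k) ≠ 0) :
    {c : R | c ^ N = 1}.encard = (N : ℕ∞) := by
  haveI := Fact.mk hp
  haveI : NeZero ((N : k)) := ⟨hNk⟩
  obtain ⟨ζ, hζ⟩ := HasEnoughRootsOfUnity.exists_primitiveRoot k N
  have hcard : (Polynomial.nthRootsFinset N (1 : k)).card = N := hζ.card_nthRootsFinset
  -- the image of the roots in R is the set of roots in k
  have himg : π '' {c : R | c ^ N = 1} = ↑(Polynomial.nthRootsFinset N (1 : k)) := by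
    ext d
    constructor
    · rintro ⟨c, hc, rfl⟩
      rw [Finset.mem_coe, Polynomial.mem_nthRootsFinset hN, ← map_pow, hc, map_one]
    · intro hd
      rw [Finset.mem_coe, Polynomial.mem_nthRootsFinset hN] at hd
      obtain ⟨a, ha⟩ := hπs d
      set u0 := a ^ N with hu0def
      have hπu0 : π u0 = 1 := by rw [hu0def, map_pow, ha, hd]
      obtain ⟨m, hm⟩ := hker (u0 - 1) (by rw [map_sub, hπu0, map_one, sub_self])
      -- u0 ^ (p ^ m) = 1
      have hppow : m ≤ p ^ m := (Nat.lt_pow_self hp.one_lt).le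
      have hu0pow : u0 ^ p ^ m = 1 := by
        have h1 : u0 = 1 + (u0 - 1) := by ring
        have h2 := add_pow_char_pow (1 : R) (u0 - 1) p m
        have h3 : (u0 - 1) ^ p ^ m = 0 := by
          rw [show p ^ m = m + (p ^ m - m) by omega, pow_add, hm, zero_mul]
        rw [h1, h2, h3, one_pow, add_zero]
      have hcop : Nat.Coprime N (p ^ m) :=
        Nat.Coprime.pow_right m ((hp.coprime_iff_not_dvd.mpr hpN).symm)
      have hp1 : 1 < p ^ m ∨ m = 0 := by
        rcases Nat.eq_zero_or_pos m with h | h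
        · right; exact h
        · left; exact Nat.one_lt_pow h.ne' hp.one_lt
      rcases hp1 with hp1 | rfl
      · obtain ⟨M, -, hM⟩ := Nat.exists_mul_mod_eq_one_of_coprime hcop hp1
        have hNM : u0 ^ (N * M) = u0 := by
          have hsplit : N * M = p ^ m * (N * M / p ^ m) + 1 := by
            rw [← hM]; exact (Nat.div_add_mod _ _).symm
          rw [hsplit, pow_add, pow_mul, hu0pow, one_pow, one_mul, pow_one]
        refine ⟨a * u0 ^ (M * (p ^ m - 1)), ?_, ?_⟩
        · show (a * u0 ^ (M * (p ^ m - 1))) ^ N = 1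
          calc (a * u0 ^ (M * (p ^ m - 1))) ^ N
              = u0 * u0 ^ (N * M * (p ^ m - 1)) := by
                rw [mul_pow, ← pow_mul, ← hu0def]
                congr 1
                ring
            _ = u0 * u0 ^ (p ^ m - 1) := by rw [pow_mul, hNM]
            _ = u0 ^ (1 + (p ^ m - 1)) := by rw [pow_add, pow_one]
            _ = 1 := by rw [show 1 + (p ^ m - 1) = p ^ m by omega, hu0pow]
        · show π (a * u0 ^ (M * (p ^ m - 1))) = d
          rw [map_mul, map_pow, hπu0, one_pow, mul_one, ha]
      · -- m = 0 : the ring is trivial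
        have h10 : (1 : R) = 0 := by simpa using hm
        haveI := subsingleton_of_zero_eq_one h10.symm
        exact ⟨a, Subsingleton.elim _ _, ha⟩
  have hinj : Set.InjOn π {c : R | c ^ N = 1} := by
    intro c hc c' hc' hcc
    simp only [Set.mem_setOf_eq] at hc hc'
    have hS0 : (∑ i ∈ Finset.range N, c ^ i * c' ^ (N - 1 - i)) * (c - c') = 0 := by
      rw [geom_sum₂_mul, hc, hc', sub_self]
    have hπc0 : π c ≠ 0 := by
      intro h
      have : (π c) ^ N = 1 := by rw [← map_pow, hc, map_one]
      rw [h, zero_pow hN.ne'] at this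
      exact zero_ne_one this
    have hπS : π (∑ i ∈ Finset.range N, c ^ i * c' ^ (N - 1 - i))
        = (N : k) * (π c) ^ (N - 1) := by
      rw [map_sum]
      rw [Finset.sum_congr rfl (fun i hi => ?_)]
      · rw [Finset.sum_const, Finset.card_range, nsmul_eq_mul]
      · rw [map_mul, map_pow, map_pow, hcc, ← pow_add,
          show i + (N - 1 - i) = N - 1 by have := Finset.mem_range.mp hi; omega]
    have hSu : IsUnit (∑ i ∈ Finset.range N, c ^ i * c' ^ (N - 1 - i)) := by
      refine hunit _ ?_
      rw [hπS]
      exact mul_ne_zero hNk (pow_ne_zero _ hπc0)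
    have := (hSu.mul_right_eq_zero).mp hS0
    exact sub_eq_zero.mp this
  calc ({c : R | c ^ N = 1}).encard = (π '' {c : R | c ^ N = 1}).encard := (hinj.encard_image).symm
    _ = (↑(Polynomial.nthRootsFinset N (1 : k)) : Set k).encard := by rw [himg]
    _ = ((Polynomial.nthRootsFinset N (1 : k)).card : ℕ∞) := Set.encard_coe_eq_coe_finsetCard _
    _ = (N : ℕ∞) := by rw [hcard]


lemma isqPoly_C_mul_X {R : Type*} [CommRing R] (q : ℕ) (c : R) :
    IsqPoly q (Polynomial.C c * Polynomial.X) := by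
  intro m hm
  refine ⟨0, ?_⟩
  rw [pow_zero]
  by_contra h
  rw [Polynomial.mem_support_iff, Polynomial.coeff_C_mul, Polynomial.coeff_X,
    if_neg (fun hh => h hh.symm), mul_zero] at hm
  exact hm rfl

open Polynomial in
/-- The automorphism group of the Drinfeld module `φ_T = T + τ^r` over `W/μ^n W` consists
exactly of the linear polynomials `cX` with `c^(q^r-1) = 1`, and has `q^r - 1` elements. -/
theorem stmt7 (p : ℕ) (hp : p.Prime) (e : ℕ) (he : 0 < e) (q : ℕ) (hq : q = p ^ e)
    (W : Type*) [CommRing W] [IsDomain W] [IsDiscreteValuationRing W] [CharP W p]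
    [IsAdicComplete (IsLocalRing.maximalIdeal W) W]
    [IsAlgClosed (IsLocalRing.ResidueField W)]
    (μ : W) (hμ : Irreducible μ)
    (r n : ℕ) (hr : 1 ≤ r) (hn : 1 ≤ n) (t : W)
    (ψbar : Polynomial (W ⧸ Ideal.span {μ ^ n}))
    (hψ : ψbar = C (Ideal.Quotient.mk (Ideal.span {μ ^ n}) t) * X + X ^ q ^ r) :
    IsoSet q ψbar ψbar
        = {u : Polynomial (W ⧸ Ideal.span {μ ^ n}) |
            ∃ c : W ⧸ Ideal.span {μ ^ n}, c ^ (q ^ r - 1) = 1 ∧ u = C c * X} ∧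
      (IsoSet q ψbar ψbar).encard = ((q ^ r - 1 : ℕ) : ℕ∞) := by
  haveI := Fact.mk hp
  have hq1 : 1 < q := hq ▸ Nat.one_lt_pow he.ne' hp.one_lt
  have hq2 : 2 ≤ q ^ r := by
    calc 2 ≤ q := hq1
      _ = q ^ 1 := (pow_one q).symm
      _ ≤ q ^ r := Nat.pow_le_pow_right (by omega) hr
  -- the ideal is contained in the maximal ideal
  have hIle : Ideal.span ({μ ^ n} : Set W) ≤ IsLocalRing.maximalIdeal W := by
    rw [Ideal.span_le, Set.singleton_subset_iff]
    exact Ideal.pow_mem_of_mem _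
      ((IsLocalRing.mem_maximalIdeal μ).mpr hμ.not_isUnit) n (by omega)
  -- characteristic of the quotient
  haveI hcharq : CharP (W ⧸ Ideal.span ({μ ^ n} : Set W)) p := by
    refine CharP.quotient' p _ (fun x hx => ?_)
    by_cases hdvd : p ∣ x
    · exact (CharP.cast_eq_zero_iff W p x).mpr hdvd
    · exfalso
      have hcop : Nat.Coprime x p := (hp.coprime_iff_not_dvd.mpr hdvd).symm
      obtain ⟨m', -, hm'⟩ := Nat.exists_mul_mod_eq_one_of_coprime hcop hp.one_lt
      have hxu : IsUnit ((x : ℕ) : W) := by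
        apply IsUnit.of_mul_eq_one ((m' : ℕ) : W)
        have hcast : ((x * m' : ℕ) : W) = 1 := by
          calc ((x * m' : ℕ) : W) = ((p * (x * m' / p) + x * m' % p : ℕ) : W) := by
                rw [Nat.div_add_mod]
            _ = (p : W) * ((x * m' / p : ℕ) : W) + ((x * m' % p : ℕ) : W) := by push_cast; ring
            _ = 1 := by rw [CharP.cast_eq_zero W p, hm', zero_mul, zero_add, Nat.cast_one]
        rw [← Nat.cast_mul]; exact hcast
      have hmem := hIle hx
      rw [IsLocalRing.mem_maximalIdeal] at hmem
      exact hmem hxu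
  -- the projection to the residue field
  set π : (W ⧸ Ideal.span ({μ ^ n} : Set W)) →+* IsLocalRing.ResidueField W :=
    Ideal.Quotient.lift _ (IsLocalRing.residue W)
      (fun w hw => (IsLocalRing.residue_eq_zero_iff w).mpr (hIle hw)) with hπdef
  have hπmk : ∀ w : W, π (Ideal.Quotient.mk _ w) = IsLocalRing.residue W w :=
    fun w => Ideal.Quotient.lift_mk _ _ _
  have hπs : Function.Surjective π := by
    intro d
    obtain ⟨w, rfl⟩ := Ideal.Quotient.mk_surjective (I := IsLocalRing.maximalIdeal W) d
    exact ⟨Ideal.Quotient.mk _ w, hπmk w⟩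
  have hker : ∀ x : W ⧸ Ideal.span ({μ ^ n} : Set W), π x = 0 → x ^ n = 0 := by
    intro x hx
    obtain ⟨w, rfl⟩ := Ideal.Quotient.mk_surjective x
    rw [hπmk, IsLocalRing.residue_eq_zero_iff, hμ.maximalIdeal_eq,
      Ideal.mem_span_singleton] at hx
    obtain ⟨y, rfl⟩ := hx
    rw [← map_pow, Ideal.Quotient.eq_zero_iff_mem, Ideal.mem_span_singleton]
    exact ⟨y ^ n, by rw [mul_pow]⟩
  have hunit : ∀ x : W ⧸ Ideal.span ({μ ^ n} : Set W), π x ≠ 0 → IsUnit x := by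
    intro x hx
    obtain ⟨w, rfl⟩ := Ideal.Quotient.mk_surjective x
    rw [hπmk] at hx
    have hw : IsUnit w := by
      by_contra hwu
      exact hx ((IsLocalRing.residue_eq_zero_iff w).mpr
        ((IsLocalRing.mem_maximalIdeal w).mpr hwu))
    exact hw.map _
  -- (q^r - 1) is nonzero in the residue field
  have hpk : ((p : ℕ) : IsLocalRing.ResidueField W) = 0 := by
    rw [← map_natCast (IsLocalRing.residue W) p, CharP.cast_eq_zero W p, map_zero]
  have hNk : ((q ^ r - 1 : ℕ) : IsLocalRing.ResidueField W) ≠ 0 := by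
    have hcast : ((q ^ r - 1 : ℕ) : IsLocalRing.ResidueField W)
        = ((q : ℕ) : IsLocalRing.ResidueField W) ^ r - 1 := by
      rw [Nat.cast_sub (by omega : 1 ≤ q ^ r)]
      push_cast
      ring
    have hq0 : ((q : ℕ) : IsLocalRing.ResidueField W) = 0 := by
      rw [hq]
      push_cast
      rw [hpk, zero_pow he.ne']
    rw [hcast, hq0, zero_pow (by omega : r ≠ 0), zero_sub]
    simp
  have hpN : ¬ p ∣ q ^ r - 1 := by
    intro hdvd
    have hpq : p ∣ q ^ r := hq ▸ dvd_pow (dvd_pow_self p he.ne') (by omega)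
    have h1 : p ∣ 1 := by
      have h2 := Nat.dvd_sub hpq hdvd
      simpa [show q ^ r - (q ^ r - 1) = 1 by omega] using h2
    exact hp.one_lt.ne' (Nat.dvd_one.mp h1)
  have hcount := count_roots_nilpotent π hπs (fun x hx => ⟨n, hker x hx⟩) hunit hp
    (q ^ r - 1) (by omega) hpN hNk
  -- the set equality
  have hset : IsoSet q ψbar ψbar
      = {u : Polynomial (W ⧸ Ideal.span {μ ^ n}) |
          ∃ c : W ⧸ Ideal.span {μ ^ n}, c ^ (q ^ r - 1) = 1 ∧ u = C c * X} := by
    ext u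
    constructor
    · rintro ⟨hqp, ⟨v, hvq, huv, hvu⟩, hcomm⟩
      rw [hψ] at hcomm
      have hmap : (u.map π).comp (v.map π) = X := by
        have h := congrArg (Polynomial.map π) huv
        rwa [Polynomial.map_comp, Polynomial.map_X] at h
      have hdeg1 : (u.map π).natDegree = 1 := by
        have h := natDegree_comp (p := u.map π) (q := v.map π)
        rw [hmap, natDegree_X] at h
        exact Nat.eq_one_of_mul_eq_one_right h.symm
      have hnil : ∀ i, 1 ≤ i → IsNilpotent (u.coeff (q ^ i)) := by
        intro i hi
        have hlt : (u.map π).natDegree < q ^ i := by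
          rw [hdeg1]
          calc 1 < q := hq1
            _ = q ^ 1 := (pow_one q).symm
            _ ≤ q ^ i := Nat.pow_le_pow_right (by omega) hi
        have h0 := coeff_eq_zero_of_natDegree_lt hlt
        rw [coeff_map] at h0
        exact ⟨n, hker _ h0⟩
      have hvan := qpoly_comm_coeff_zero hp he hq hr _ hqp hcomm hnil
      have hueq : u = C (u.coeff 1) * X := by
        ext d
        rw [coeff_C_mul, coeff_X]
        by_cases hd : d = 1
        · subst hd; simp
        · rw [if_neg (fun h => hd h.symm), mul_zero]
          by_contra hne
          obtain ⟨i, rfl⟩ := hqp d (mem_support_iff.mpr hne)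
          rcases Nat.eq_zero_or_pos i with rfl | hi
          · exact hd (by simp)
          · exact hne (hvan i hi)
      have hrel := qpoly_comm_rel hp he hq hr (Ideal.Quotient.mk _ t) hqp hcomm 0
      simp only [zero_add, pow_zero] at hrel
      rw [hvan r hr] at hrel
      simp only [zero_mul, mul_zero, zero_add] at hrel
      -- hrel : u.coeff 1 = u.coeff 1 ^ q ^ r
      have hunit0 : IsUnit (u.coeff 1) := by
        have h2 : (C (u.coeff 1) * X).comp v = X := hueq ▸ huv
        rw [mul_comp, C_comp, X_comp] at h2
        have h3 := congrArg (fun f : Polynomial (W ⧸ Ideal.span ({μ ^ n} : Set W)) =>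
          f.coeff 1) h2
        simp only [coeff_C_mul, coeff_X_one] at h3
        exact IsUnit.of_mul_eq_one _ h3
      have haN : (u.coeff 1) ^ (q ^ r - 1) = 1 := by
        have h3 : u.coeff 1 * (u.coeff 1) ^ (q ^ r - 1) = u.coeff 1 * 1 := by
          rw [mul_one, ← pow_succ', show q ^ r - 1 + 1 = q ^ r by omega]
          exact hrel.symm
        exact hunit0.mul_left_cancel h3
      exact ⟨u.coeff 1, haN, hueq⟩
    · rintro ⟨c, hcN, rfl⟩
      have hcq : c ^ q ^ r = c := by
        rw [show q ^ r = (q ^ r - 1) + 1 by omega, pow_succ, hcN, one_mul]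
      have hcb : c * c ^ (q ^ r - 2) = 1 := by
        rw [← pow_succ', show q ^ r - 2 + 1 = q ^ r - 1 by omega, hcN]
      have hcompCX : ∀ a b : W ⧸ Ideal.span ({μ ^ n} : Set W),
          (C a * X).comp (C b * X) = C (a * b) * X := by
        intro a b
        rw [mul_comp, C_comp, X_comp, ← mul_assoc, ← C_mul]
      refine ⟨isqPoly_C_mul_X q c, ⟨C (c ^ (q ^ r - 2)) * X, isqPoly_C_mul_X q _, ?_, ?_⟩, ?_⟩
      · rw [hcompCX, hcb, map_one, one_mul]
      · rw [hcompCX, mul_comm (c ^ (q ^ r - 2)) c, hcb, map_one, one_mul]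
      · rw [hψ, mul_comp, C_comp, X_comp, add_comp, mul_comp, C_comp, X_comp, pow_comp,
          X_comp, mul_pow, ← C_pow, hcq]
        ring
  refine ⟨hset, ?_⟩
  rw [hset]
  have himg2 : {u : Polynomial (W ⧸ Ideal.span {μ ^ n}) |
        ∃ c : W ⧸ Ideal.span {μ ^ n}, c ^ (q ^ r - 1) = 1 ∧ u = C c * X}
      = (fun c : W ⧸ Ideal.span ({μ ^ n} : Set W) => C c * X) ''
          {c : W ⧸ Ideal.span ({μ ^ n} : Set W) | c ^ (q ^ r - 1) = 1} := by
    ext u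
    simp only [Set.mem_setOf_eq, Set.mem_image]
    constructor
    · rintro ⟨c, h1, h2⟩; exact ⟨c, h1, h2.symm⟩
    · rintro ⟨c, h1, h2⟩; exact ⟨c, h1, h2.symm⟩
  have hinj2 : Set.InjOn (fun c : W ⧸ Ideal.span ({μ ^ n} : Set W) => C c * X)
      {c : W ⧸ Ideal.span ({μ ^ n} : Set W) | c ^ (q ^ r - 1) = 1} := by
    intro c _ c' _ h
    have h2 := congrArg (fun f : Polynomial (W ⧸ Ideal.span ({μ ^ n} : Set W)) =>
      f.coeff 1) h
    simpa [coeff_C_mul, coeff_X_one] using h2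
  rw [himg2, hinj2.encard_image]
  exact hcount
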